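/- If the similarity matrix S is symmetric, then for every λ ∈ ℝ^c with Σ_{p=1}^c λ_p = 1 one has Q(M(λ)) = C + Σ_{i ≤ l, j > l} S_{ij} ‖Y_i − λ‖², where C = (1/2) Σ_{i ≤ l, j ≤ l} S_{ij} ‖Y_i − Y_j‖². -/

import Mathlib

open Finset

/-- If the similarity matrix S is symmetric, then for every λ ∈ ℝ^c
with Σ_p λ_p = 1 one has Q(M(λ)) = C + Σ_{i ≤ l, j > l} S_{ij} ‖Y_i − λ‖², where
C = (1/2) Σ_{i ≤ l, j ≤ l} S_{ij} ‖Y_i − Y_j‖². -/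
theorem masc_objective_decomposition_symmetric
    (l m c : ℕ) (hl : 1 ≤ l) (hm : 1 ≤ m) (hc : 1 ≤ c)
    (S : Fin (l + m) → Fin (l + m) → ℝ)
    (hS : ∀ i j, S i j = S j i)
    (Y : Fin (l + m) → EuclideanSpace ℝ (Fin c))
    (Z : Fin c → Fin (l + m) → EuclideanSpace ℝ (Fin c))
    (hZ : ∀ (p : Fin c) (i : Fin (l + m)),
      Z p i = if (i : ℕ) < l then Y i else EuclideanSpace.single p (1 : ℝ))
    (M : EuclideanSpace ℝ (Fin c) → Fin (l + m) → EuclideanSpace ℝ (Fin c))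
    (hM : ∀ (lam : EuclideanSpace ℝ (Fin c)) (i : Fin (l + m)),
      M lam i = ∑ p : Fin c, lam p • Z p i)
    (Q : (Fin (l + m) → EuclideanSpace ℝ (Fin c)) → ℝ)
    (hQ : ∀ N : Fin (l + m) → EuclideanSpace ℝ (Fin c),
      Q N = (1 / 2) * ∑ i : Fin (l + m), ∑ j : Fin (l + m), S i j * ‖N i - N j‖ ^ 2)
    (lam : EuclideanSpace ℝ (Fin c)) (hlam : ∑ p : Fin c, lam p = 1) :
    Q (M lam) =
      (1 / 2) * (∑ i ∈ univ.filter (fun i : Fin (l + m) => (i : ℕ) < l),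
          ∑ j ∈ univ.filter (fun j : Fin (l + m) => (j : ℕ) < l),
            S i j * ‖Y i - Y j‖ ^ 2)
      + (∑ i ∈ univ.filter (fun i : Fin (l + m) => (i : ℕ) < l),
          ∑ j ∈ univ.filter (fun j : Fin (l + m) => l ≤ (j : ℕ)),
            S i j * ‖Y i - lam‖ ^ 2) := by

  have hMeq : ∀ i, M lam i = if (i : ℕ) < l then Y i else lam := by
    intro i
    rw [hM]
    by_cases hi : (i : ℕ) < l
    · simp only [hZ, hi, if_pos, if_true]
      rw [← Finset.sum_smul, hlam, one_smul]
    · simp only [hZ, hi, if_false]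
      ext q
      rw [show ((∑ p : Fin c, lam p • EuclideanSpace.single p (1:ℝ)) q)
          = ∑ p : Fin c, (lam p • EuclideanSpace.single p (1:ℝ)) q from
        by rw [WithLp.ofLp_sum]; exact Finset.sum_apply q Finset.univ _]
      simp [EuclideanSpace.single_apply]
  set A := univ.filter (fun i : Fin (l + m) => (i : ℕ) < l) with hA
  set B := univ.filter (fun i : Fin (l + m) => ¬ (i : ℕ) < l) with hB
  have hBeq : B = univ.filter (fun j : Fin (l + m) => l ≤ (j : ℕ)) := by
    simp [hB, not_lt]
  have hsplit : ∀ g : Fin (l + m) → ℝ,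
      ∑ i, g i = (∑ i ∈ A, g i) + ∑ i ∈ B, g i := by
    intro g
    exact (Finset.sum_filter_add_sum_filter_not _ _ _).symm
  have hAmem : ∀ i ∈ A, (i : ℕ) < l := by intro i hi; simpa [hA] using hi
  have hBmem : ∀ i ∈ B, ¬ (i : ℕ) < l := by intro i hi; simpa [hB] using hi
  rw [hQ]
  have key : ∑ i, ∑ j, S i j * ‖M lam i - M lam j‖ ^ 2
      = (∑ i ∈ A, ∑ j ∈ A, S i j * ‖Y i - Y j‖ ^ 2)
        + 2 * ∑ i ∈ A, ∑ j ∈ B, S i j * ‖Y i - lam‖ ^ 2 := by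
    rw [hsplit]
    have h1 : ∑ i ∈ A, ∑ j, S i j * ‖M lam i - M lam j‖ ^ 2
        = (∑ i ∈ A, ∑ j ∈ A, S i j * ‖Y i - Y j‖ ^ 2)
          + ∑ i ∈ A, ∑ j ∈ B, S i j * ‖Y i - lam‖ ^ 2 := by
      rw [← Finset.sum_add_distrib]
      refine Finset.sum_congr rfl fun i hi => ?_
      rw [hsplit]
      congr 1
      · refine Finset.sum_congr rfl fun j hj => ?_
        rw [hMeq, hMeq, if_pos (hAmem i hi), if_pos (hAmem j hj)]
      · refine Finset.sum_congr rfl fun j hj => ?_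
        rw [hMeq, hMeq, if_pos (hAmem i hi), if_neg (hBmem j hj)]
    have h2 : ∑ i ∈ B, ∑ j, S i j * ‖M lam i - M lam j‖ ^ 2
        = ∑ i ∈ A, ∑ j ∈ B, S i j * ‖Y i - lam‖ ^ 2 := by
      have : ∀ i ∈ B, ∑ j, S i j * ‖M lam i - M lam j‖ ^ 2
          = ∑ j ∈ A, S i j * ‖M lam i - M lam j‖ ^ 2 := by
        intro i hi
        rw [hsplit]
        have : ∑ j ∈ B, S i j * ‖M lam i - M lam j‖ ^ 2 = 0 := by
          refine Finset.sum_eq_zero fun j hj => ?_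
          rw [hMeq, hMeq, if_neg (hBmem i hi), if_neg (hBmem j hj)]
          simp
        rw [this, add_zero]
      rw [Finset.sum_congr rfl this, Finset.sum_comm]
      refine Finset.sum_congr rfl fun j hj => Finset.sum_congr rfl fun i hi => ?_
      rw [hMeq, hMeq, if_neg (hBmem i hi), if_pos (hAmem j hj), hS i j,
        norm_sub_rev]
    rw [h1, h2]; ring
  rw [key, hBeq]
  ring
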